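/- Let n ∈ ℝ with n < d − 1. Then there is a constant C > 0, independent of δ, such that for every 0 < δ ≤ 1/2, ∫_{Σ₀ ∩ B_δ} |x|^{−n} d_Σ x ≤ C·δ^{d−1−n}, where B_δ denotes the closed ball of radius δ centred at 0. In particular, ∫_{Σ₀ ∩ B₁} |x|^{−n} d_Σ x < ∞. -/

import Mathlib

set_option maxHeartbeats 1000000

open MeasureTheory Real
open scoped ENNReal NNReal RealInnerProductSpace

open Metric Set
lemma aux_ball_hausdorff {F : Type*} [NormedAddCommGroup F] [InnerProductSpace ℝ F]
    [FiniteDimensional ℝ F] [MeasurableSpace F] [BorelSpace F] {m : ℕ}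
    (hm : Module.finrank ℝ F = m) (c : F) {ρ : ℝ} (hρ : 0 ≤ ρ) :
    μH[(m:ℝ)] (Metric.closedBall c ρ) ≤
      (((m : ℝ≥0) ^ (1 / (2:ℝ≥0∞)).toReal : ℝ≥0) : ℝ≥0∞) ^ (m:ℝ) *
        ENNReal.ofReal ((2*ρ)^m) := by
  subst hm
  set M := Module.finrank ℝ F with hM
  let e := (stdOrthonormalBasis ℝ F).repr
  have h1 : μH[(M:ℝ)] (Metric.closedBall c ρ)
      = μH[(M:ℝ)] (e '' Metric.closedBall c ρ) :=
    (e.isometry.hausdorffMeasure_image (Or.inl (by positivity)) _).symm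
  have h2 : e '' Metric.closedBall c ρ ⊆ Metric.closedBall (e c) ρ := by
    rintro - ⟨x, hx, rfl⟩
    simpa [Metric.mem_closedBall, e.isometry.dist_eq] using hx
  rw [h1]
  refine le_trans (measure_mono h2) ?_
  -- now in EuclideanSpace ℝ (Fin M)
  have hanti := PiLp.antilipschitzWith_ofLp 2 (fun _ : Fin M => ℝ)
  have h3 := hanti.le_hausdorffMeasure_image (by positivity : (0:ℝ) ≤ (M:ℝ))
      (Metric.closedBall (e c) ρ)
  have hcard : (Fintype.card (Fin M) : ℝ≥0) = (M : ℝ≥0) := by simp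
  rw [hcard] at h3
  refine h3.trans ?_
  refine mul_le_mul_right ?_ _
  have h4 : (WithLp.equiv 2 (∀ _ : Fin M, ℝ)) '' Metric.closedBall (e c) ρ ⊆
      Metric.closedBall ((WithLp.equiv 2 (∀ _ : Fin M, ℝ)) (e c)) ρ := by
    rintro - ⟨x, hx, rfl⟩
    have := (PiLp.lipschitzWith_ofLp 2 (fun _ : Fin M => ℝ)).dist_le_mul x (e c)
    simp only [NNReal.coe_one, one_mul, ENNReal.coe_one] at this
    exact Metric.mem_closedBall.2 (le_trans this hx)
  refine le_trans (measure_mono h4) ?_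
  have h5 : (μH[(M:ℝ)] : Measure (∀ _ : Fin M, ℝ)) = volume := by
    have := hausdorffMeasure_pi_real (ι := Fin M)
    have hc : ((Fintype.card (Fin M) : ℝ)) = (M:ℝ) := by simp
    rwa [hc] at this
  rw [h5, Real.volume_pi_closedBall _ hρ]
  simp


lemma aux_gradient_inner {d : ℕ} (ω : EuclideanSpace ℝ (Fin d) → ℝ)
    (z v : EuclideanSpace ℝ (Fin d)) : ⟪gradient ω z, v⟫ = fderiv ℝ ω z v := by
  show ⟪(InnerProductSpace.toDual ℝ _).symm (fderiv ℝ ω z), v⟫ = fderiv ℝ ω z v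
  exact InnerProductSpace.toDual_symm_apply

lemma aux_local {d m : ℕ} (hm : d = m + 1) (ω : EuclideanSpace ℝ (Fin d) → ℝ)
    (hdiff : Differentiable ℝ ω) {C₂ : ℝ} (hC₂ : 0 < C₂)
    (hLipgrad : ∀ z ∈ Metric.closedBall (0 : EuclideanSpace ℝ (Fin d)) 2,
      ∀ w ∈ Metric.closedBall (0 : EuclideanSpace ℝ (Fin d)) 2,
      ‖fderiv ℝ ω z - fderiv ℝ ω w‖ ≤ C₂ * ‖z - w‖)
    (a : EuclideanSpace ℝ (Fin d)) (ha : ω a = 0) (hga : gradient ω a ≠ 0)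
    {ρ : ℝ} (hρ : 0 < ρ) (hρg : C₂ * ρ ≤ ‖gradient ω a‖ / 2)
    (hsub : Metric.closedBall a ρ ⊆ Metric.closedBall (0 : EuclideanSpace ℝ (Fin d)) 2) :
    μH[(m:ℝ)] ({x | ω x = 0} ∩ Metric.closedBall a ρ) ≤
      (2:ℝ≥0∞)^(m:ℝ) * (((m : ℝ≥0) ^ (1 / (2:ℝ≥0∞)).toReal : ℝ≥0) : ℝ≥0∞) ^ (m:ℝ) *
        ENNReal.ofReal ((2*ρ)^m) := by
  classical
  set g : EuclideanSpace ℝ (Fin d) := gradient ω a with hgdef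
  have hgnorm : 0 < ‖g‖ := norm_pos_iff.2 hga
  set T : Set (EuclideanSpace ℝ (Fin d)) := {x | ω x = 0} ∩ Metric.closedBall a ρ with hTdef
  -- mean value estimate
  have hmv : ∀ x ∈ T, ∀ y ∈ T, |fderiv ℝ ω a (x - y)| ≤ (C₂ * ρ) * ‖x - y‖ := by
    intro x hx y hy
    have hbound : ∀ z ∈ Metric.closedBall a ρ, ‖fderiv ℝ ω z - fderiv ℝ ω a‖ ≤ C₂ * ρ := by
      intro z hz
      have h1 := hLipgrad z (hsub hz) a (hsub (Metric.mem_closedBall_self hρ.le))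
      refine h1.trans ?_
      have h2 : ‖z - a‖ ≤ ρ := by
        rw [← dist_eq_norm]; exact hz
      nlinarith
    have := (convex_closedBall a ρ).norm_image_sub_le_of_norm_fderiv_le'
      (fun z _ => (hdiff z)) hbound hy.2 hx.2
    have hx0 : ω x = 0 := hx.1
    have hy0 : ω y = 0 := hy.1
    rw [hx0, hy0] at this
    simpa [Real.norm_eq_abs, abs_sub_comm] using this
  -- inner product control
  have hinner : ∀ x ∈ T, ∀ y ∈ T, |⟪g, x - y⟫| ≤ ‖g‖/2 * ‖x - y‖ := by
    intro x hx y hy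
    rw [hgdef, aux_gradient_inner]
    refine (hmv x hx y hy).trans ?_
    have : 0 ≤ ‖x - y‖ := norm_nonneg _
    nlinarith
  -- the hyperplane
  set K : Submodule ℝ (EuclideanSpace ℝ (Fin d)) := (ℝ ∙ g)ᗮ with hKdef
  have hgK : g ∈ Kᗮ := by
    rw [hKdef, Submodule.orthogonal_orthogonal]
    exact Submodule.mem_span_singleton_self g
  set P := Submodule.orthogonalProjectionOnto K with hPdef
  -- lower bound for the projection distances
  have hPlow : ∀ x ∈ T, ∀ y ∈ T,
      ‖x - y‖ ≤ 2 * ‖(P x : EuclideanSpace ℝ (Fin d)) - (P y : EuclideanSpace ℝ (Fin d))‖ := by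
    intro x hx y hy
    set v : EuclideanSpace ℝ (Fin d) := x - y with hv
    set c : ℝ := ⟪g, v⟫ / (‖g‖^2) with hc
    set w : EuclideanSpace ℝ (Fin d) := v - c • g with hw
    have hwK : w ∈ K := by
      rw [hKdef, Submodule.mem_orthogonal_singleton_iff_inner_right]
      rw [hw, inner_sub_right, inner_smul_right, hc, real_inner_self_eq_norm_sq]
      field_simp
      simp
    have hvcw : v = c • g + w := by rw [hw]; abel
    have hPv : P x - P y = ⟨w, hwK⟩ := by
      have h2 : P (c • g) = 0 := by
        refine Submodule.orthogonalProjectionOnto_apply_of_mem_orthogonal ?_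
        exact Submodule.smul_mem _ _ hgK
      have h3 : P w = ⟨w, hwK⟩ := Submodule.orthogonalProjectionOnto_mem_subspace_eq_self ⟨w, hwK⟩
      have h1 : P v = P (c • g) + P w := by rw [hvcw, map_add]
      rw [← map_sub, ← hv, h1, h2, h3, zero_add]
    have hgw : ⟪g, w⟫ = 0 := by
      rw [hw, inner_sub_right, inner_smul_right, hc, real_inner_self_eq_norm_sq]
      field_simp
      simp
    have hortho : ⟪c • g, w⟫ = 0 := by
      rw [real_inner_smul_left, hgw]; ring
    have hdecomp : ‖v‖^2 = ‖c • g‖^2 + ‖w‖^2 := by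
      rw [hvcw, norm_add_sq_real, hortho]
      ring
    have hcg : ‖c • g‖ ≤ ‖v‖ / 2 := by
      rw [norm_smul, hc]
      have h1 : |⟪g, v⟫| ≤ ‖g‖/2 * ‖v‖ := hinner x hx y hy
      rw [Real.norm_eq_abs, abs_div, abs_of_nonneg (by positivity : (0:ℝ) ≤ ‖g‖^2)]
      rw [div_mul_eq_mul_div, div_le_div_iff₀ (by positivity) (by norm_num)]
      have h2 : |⟪g, v⟫| * ‖g‖ * 2 ≤ (‖g‖/2 * ‖v‖) * ‖g‖ * 2 := by
        have := mul_le_mul_of_nonneg_right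
          (mul_le_mul_of_nonneg_right h1 (norm_nonneg g)) (by norm_num : (0:ℝ) ≤ 2)
        linarith
      calc |⟪g, v⟫| * ‖g‖ * 2 ≤ (‖g‖/2 * ‖v‖) * ‖g‖ * 2 := h2
        _ = ‖v‖ * ‖g‖^2 := by ring
    have hPw : (P x : EuclideanSpace ℝ (Fin d)) - (P y : EuclideanSpace ℝ (Fin d)) = w := by
      rw [← Submodule.coe_sub, hPv]
    have hfin : ‖v‖ ≤ 2 * ‖w‖ := by
      clear_value w c v
      have hcg0 : 0 ≤ ‖c • g‖ := norm_nonneg _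
      nlinarith [norm_nonneg v, norm_nonneg w]
    rw [hv] at hfin
    rw [hPw]
    exact hfin
  -- dimension of the hyperplane
  have hrk : Module.finrank ℝ (EuclideanSpace ℝ (Fin d)) = d := finrank_euclideanSpace_fin
  have hKrank : Module.finrank ℝ K = m := by
    rw [hKdef]
    have h1 := Submodule.finrank_add_finrank_orthogonal (K := (ℝ ∙ g))
    have h2 : Module.finrank ℝ (ℝ ∙ g) = 1 := finrank_span_singleton hga
    rw [h2, hrk] at h1
    omega
  have hnonempty : Nonempty (EuclideanSpace ℝ (Fin d)) := ⟨0⟩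
  set Pf : EuclideanSpace ℝ (Fin d) → K := fun x => P x with hPf
  set Ti : Set K := Pf '' T with hTi
  set Gf : K → EuclideanSpace ℝ (Fin d) := Function.invFunOn Pf T with hGf
  have hGmem : ∀ u ∈ Ti, Gf u ∈ T ∧ Pf (Gf u) = u := by
    rintro - ⟨x, hx, rfl⟩
    exact ⟨Function.invFunOn_apply_mem hx, Function.invFunOn_apply_eq hx⟩
  have hTsub : T ⊆ Gf '' Ti := by
    intro x hx
    refine ⟨Pf x, Set.mem_image_of_mem _ hx, ?_⟩
    have h1 : Gf (Pf x) ∈ T := Function.invFunOn_apply_mem hx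
    have h2 : Pf (Gf (Pf x)) = Pf x := Function.invFunOn_apply_eq hx
    have h3 := hPlow (Gf (Pf x)) h1 x hx
    have h4 : (Pf (Gf (Pf x)) : EuclideanSpace ℝ (Fin d)) = (Pf x : EuclideanSpace ℝ (Fin d)) :=
      congrArg _ h2
    have h5 : ‖Gf (Pf x) - x‖ ≤ 0 := by
      refine h3.trans ?_
      rw [show (P (Gf (Pf x)) : EuclideanSpace ℝ (Fin d)) = (P x : EuclideanSpace ℝ (Fin d))
        from h4]
      simp
    have h6 : Gf (Pf x) - x = 0 := by
      have := norm_nonneg (Gf (Pf x) - x)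
      have h7 : ‖Gf (Pf x) - x‖ = 0 := le_antisymm h5 this
      exact norm_eq_zero.1 h7
    exact sub_eq_zero.1 h6
  have hLip : LipschitzOnWith 2 Gf Ti := by
    apply LipschitzOnWith.of_dist_le_mul
    intro u hu v hv
    obtain ⟨hu1, hu2⟩ := hGmem u hu
    obtain ⟨hv1, hv2⟩ := hGmem v hv
    have h3 := hPlow (Gf u) hu1 (Gf v) hv1
    rw [dist_eq_norm, dist_eq_norm]
    have h4 : (Pf (Gf u) : EuclideanSpace ℝ (Fin d)) = (u : EuclideanSpace ℝ (Fin d)) :=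
      congrArg _ hu2
    have h5 : (Pf (Gf v) : EuclideanSpace ℝ (Fin d)) = (v : EuclideanSpace ℝ (Fin d)) :=
      congrArg _ hv2
    have h6 : ‖u - v‖ = ‖(u : EuclideanSpace ℝ (Fin d)) - (v : EuclideanSpace ℝ (Fin d))‖ := by
      rw [Submodule.coe_norm, Submodule.coe_sub]
    rw [h6]
    push_cast [NNReal.coe_ofNat]
    calc ‖Gf u - Gf v‖
        ≤ 2 * ‖(P (Gf u) : EuclideanSpace ℝ (Fin d)) - (P (Gf v) : EuclideanSpace ℝ (Fin d))‖ :=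
          h3
      _ = 2 * ‖(u : EuclideanSpace ℝ (Fin d)) - (v : EuclideanSpace ℝ (Fin d))‖ := by
          rw [show (P (Gf u) : EuclideanSpace ℝ (Fin d)) = (u : EuclideanSpace ℝ (Fin d)) from h4,
            show (P (Gf v) : EuclideanSpace ℝ (Fin d)) = (v : EuclideanSpace ℝ (Fin d)) from h5]
  have hTiball : Ti ⊆ Metric.closedBall (Pf a) ρ := by
    rintro - ⟨x, hx, rfl⟩
    rw [Metric.mem_closedBall, dist_eq_norm]
    have h7 : Pf x - Pf a = P (x - a) := (map_sub P x a).symm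
    calc ‖Pf x - Pf a‖ = ‖P (x - a)‖ := by rw [h7]
      _ ≤ ‖P‖ * ‖x - a‖ := P.le_opNorm _
      _ ≤ 1 * ρ := by
          refine mul_le_mul (Submodule.orthogonalProjectionOnto_norm_le K) ?_ (norm_nonneg _) one_pos.le
          rw [← dist_eq_norm]; exact hx.2
      _ = ρ := one_mul ρ
  have hball := aux_ball_hausdorff (F := K) hKrank (Pf a) hρ.le
  calc μH[(m:ℝ)] T ≤ μH[(m:ℝ)] (Gf '' Ti) := measure_mono hTsub
    _ ≤ ((2:ℝ≥0) : ℝ≥0∞)^(m:ℝ) * μH[(m:ℝ)] Ti :=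
        hLip.hausdorffMeasure_image_le (by positivity : (0:ℝ) ≤ (m:ℝ))
    _ ≤ (2:ℝ≥0∞)^(m:ℝ) * ((((m : ℝ≥0) ^ (1 / (2:ℝ≥0∞)).toReal : ℝ≥0) : ℝ≥0∞) ^ (m:ℝ) *
          ENNReal.ofReal ((2*ρ)^m)) := by
        have hc2 : ((2:ℝ≥0) : ℝ≥0∞) = (2:ℝ≥0∞) := by norm_num
        rw [hc2]
        exact mul_le_mul_right ((measure_mono hTiball).trans hball) _
    _ = (2:ℝ≥0∞)^(m:ℝ) * (((m : ℝ≥0) ^ (1 / (2:ℝ≥0∞)).toReal : ℝ≥0) : ℝ≥0∞) ^ (m:ℝ) *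
          ENNReal.ofReal ((2*ρ)^m) := by rw [mul_assoc]


lemma aux_cover (d : ℕ) (hd : 1 ≤ d) (S : Set (EuclideanSpace ℝ (Fin d))) {R ε : ℝ}
    (hε : 0 < ε) (hR : 0 < R) (hS : S ⊆ Metric.closedBall 0 R) :
    ∃ F : Finset (EuclideanSpace ℝ (Fin d)), ↑F ⊆ S ∧
      (S ⊆ ⋃ a ∈ F, Metric.closedBall a ε) ∧
      (F.card : ℝ) ≤ ((R + ε/2)/(ε/2))^d := by
  classical
  set B : ℝ := ((R + ε/2)/(ε/2))^d with hB
  have key : ∀ F : Finset (EuclideanSpace ℝ (Fin d)), ↑F ⊆ S →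
      ((F : Set (EuclideanSpace ℝ (Fin d))).Pairwise fun a b => ε < dist a b) →
      (F.card : ℝ) ≤ B := by
    intro F hFS hsep
    have hdisj : (F : Set (EuclideanSpace ℝ (Fin d))).PairwiseDisjoint
        (fun a => Metric.closedBall a (ε/2)) := by
      intro a ha b hb hab
      exact Metric.closedBall_disjoint_closedBall (by
        have := hsep ha hb hab; linarith)
    have hvol : volume (⋃ a ∈ F, Metric.closedBall a (ε/2))
        = ∑ a ∈ F, volume (Metric.closedBall a (ε/2)) :=
      measure_biUnion_finset hdisj (fun a _ => measurableSet_closedBall)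
    have hsub : (⋃ a ∈ F, Metric.closedBall a (ε/2)) ⊆
        Metric.closedBall (0 : EuclideanSpace ℝ (Fin d)) (R + ε/2) := by
      intro x hx
      simp only [Set.mem_iUnion] at hx
      obtain ⟨a, ha, hx⟩ := hx
      have h1 : dist x a ≤ ε/2 := hx
      have h2 : dist a 0 ≤ R := hS (hFS ha)
      have := dist_triangle x a (0 : EuclideanSpace ℝ (Fin d))
      simp only [Metric.mem_closedBall]
      linarith
    have hrk : Module.finrank ℝ (EuclideanSpace ℝ (Fin d)) = d := finrank_euclideanSpace_fin
    have hball : ∀ (a : EuclideanSpace ℝ (Fin d)) {r : ℝ}, 0 ≤ r →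
        volume (Metric.closedBall a r)
        = ENNReal.ofReal (r ^ d) * volume (Metric.ball (0 : EuclideanSpace ℝ (Fin d)) 1) := by
      intro a r hr
      rw [Measure.addHaar_closedBall _ _ hr, hrk]
    have hsum : (F.card : ℝ≥0∞) * ENNReal.ofReal ((ε/2) ^ d)
          * volume (Metric.ball (0 : EuclideanSpace ℝ (Fin d)) 1)
        ≤ ENNReal.ofReal ((R + ε/2) ^ d)
          * volume (Metric.ball (0 : EuclideanSpace ℝ (Fin d)) 1) := by
      calc (F.card : ℝ≥0∞) * ENNReal.ofReal ((ε/2) ^ d)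
            * volume (Metric.ball (0 : EuclideanSpace ℝ (Fin d)) 1)
          = ∑ a ∈ F, volume (Metric.closedBall a (ε/2)) := by
            rw [Finset.sum_congr rfl (fun a _ => hball a (by linarith : (0:ℝ) ≤ ε/2))]
            simp [Finset.sum_const, nsmul_eq_mul, mul_assoc]
        _ = volume (⋃ a ∈ F, Metric.closedBall a (ε/2)) := hvol.symm
        _ ≤ volume (Metric.closedBall (0 : EuclideanSpace ℝ (Fin d)) (R + ε/2)) :=
            measure_mono hsub
        _ = ENNReal.ofReal ((R + ε/2) ^ d)
            * volume (Metric.ball (0 : EuclideanSpace ℝ (Fin d)) 1) :=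
            hball 0 (by linarith)
    have hvpos : volume (Metric.ball (0 : EuclideanSpace ℝ (Fin d)) 1) ≠ 0 :=
      (measure_ball_pos volume _ one_pos).ne'
    have hvtop : volume (Metric.ball (0 : EuclideanSpace ℝ (Fin d)) 1) ≠ ⊤ :=
      measure_ball_lt_top.ne
    have hsum2 : (F.card : ℝ≥0∞) * ENNReal.ofReal ((ε/2) ^ d)
        ≤ ENNReal.ofReal ((R + ε/2) ^ d) :=
      (ENNReal.mul_le_mul_iff_left hvpos hvtop).1 hsum
    have hsum3 : ENNReal.ofReal ((F.card : ℝ) * (ε/2) ^ d)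
        ≤ ENNReal.ofReal ((R + ε/2) ^ d) := by
      rwa [ENNReal.ofReal_mul (by positivity), ENNReal.ofReal_natCast]
    have hsum4 : (F.card : ℝ) * (ε/2) ^ d ≤ (R + ε/2) ^ d :=
      (ENNReal.ofReal_le_ofReal_iff (by positivity)).1 hsum3
    rw [hB, div_pow, le_div_iff₀ (by positivity)]
    exact hsum4
  set T : Set ℕ := {k | ∃ F : Finset (EuclideanSpace ℝ (Fin d)), ↑F ⊆ S ∧
      ((F : Set (EuclideanSpace ℝ (Fin d))).Pairwise fun a b => ε < dist a b) ∧ F.card = k}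
    with hT
  have hT0 : (0:ℕ) ∈ T := ⟨∅, by simp, by simp, by simp⟩
  have hTbdd : BddAbove T := by
    refine ⟨Nat.ceil B, fun k hk => ?_⟩
    obtain ⟨F, hFS, hsep, rfl⟩ := hk
    have := key F hFS hsep
    exact_mod_cast this.trans (Nat.le_ceil B)
  obtain ⟨F, hFS, hsep, hcard⟩ := Nat.sSup_mem ⟨0, hT0⟩ hTbdd
  refine ⟨F, hFS, ?_, key F hFS hsep⟩
  intro x hx
  by_contra hcov
  simp only [Set.mem_iUnion, Metric.mem_closedBall, not_exists] at hcov
  have hfar : ∀ a ∈ F, ε < dist x a := by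
    intro a ha
    have := hcov a
    push_neg at this
    exact this ha
  have hxF : x ∉ F := by
    intro hxF
    have h := hfar x hxF
    rw [dist_self] at h
    linarith
  have hmem : F.card + 1 ∈ T := by
    refine ⟨insert x F, ?_, ?_, by rw [Finset.card_insert_of_notMem hxF]⟩
    · intro y hy
      simp only [Finset.coe_insert, Set.mem_insert_iff] at hy
      rcases hy with rfl | hy
      · exact hx
      · exact hFS hy
    · intro a ha b hb hab
      simp only [Finset.coe_insert, Set.mem_insert_iff] at ha hb
      rcases ha with rfl | ha
      · rcases hb with rfl | hb
        · exact absurd rfl hab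
        · exact hfar b hb
      · rcases hb with rfl | hb
        · rw [dist_comm]; exact hfar a ha
        · exact hsep ha hb hab
  have := le_csSup hTbdd hmem
  omega


/-- Lemma 2.6(1), second assertion: for `n < d - 1` and `0 < δ ≤ 1/2`,
`∫_{Σ₀ ∩ B_δ} |x|^{-n} d_Σ x ≤ C·δ^{d-1-n}`; in particular
`∫_{Σ₀ ∩ B₁} |x|^{-n} d_Σ x < ∞`. -/
theorem statement15
    (d : ℕ) (hd : 2 ≤ d)
    (M_ω m_ω : ℝ) (hm : m_ω ≤ M_ω - 1)
    (ω : EuclideanSpace ℝ (Fin d) → ℝ)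
    (hω : ContDiff ℝ 4 ω)
    (C_ω : ℝ) (hCω : 0 < C_ω)
    (hωbd : ∀ i : ℕ, i ≤ 4 → ∀ x : EuclideanSpace ℝ (Fin d),
      ‖iteratedFDeriv ℝ i ω x‖ ≤ C_ω * (max 1 ‖x‖) ^ (M_ω - (i : ℝ)))
    (h0Sigma : ω 0 = 0)
    (hcrit0 : gradient ω 0 = 0)
    (hhess : Function.Bijective (fderiv ℝ (gradient ω) 0))
    (hnocrit : ∀ x : EuclideanSpace ℝ (Fin d), ω x = 0 → x ≠ 0 → gradient ω x ≠ 0)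
    (C_g : ℝ) (hCg : 0 < C_g)
    (hg1 : ∀ x : EuclideanSpace ℝ (Fin d), ω x = 0 → x ≠ 0 → 1 ≤ ‖x‖ →
      C_g * ‖x‖ ^ m_ω ≤ ‖gradient ω x‖)
    (hg2 : ∀ x : EuclideanSpace ℝ (Fin d), ω x = 0 → x ≠ 0 → ‖x‖ ≤ 1 →
      C_g * ‖x‖ ≤ ‖gradient ω x‖)
    (n : ℝ) (hn : n < d - 1) :
    (∃ C : ℝ, 0 < C ∧ ∀ δ : ℝ, 0 < δ → δ ≤ 1 / 2 →
      ∫⁻ x in {x : EuclideanSpace ℝ (Fin d) | ω x = 0 ∧ x ≠ 0} ∩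
          Metric.closedBall 0 δ,
        ENNReal.ofReal (‖x‖ ^ (-n)) ∂(μH[(d : ℝ) - 1])
      ≤ ENNReal.ofReal (C * δ ^ ((d : ℝ) - 1 - n))) ∧
    ∫⁻ x in {x : EuclideanSpace ℝ (Fin d) | ω x = 0 ∧ x ≠ 0} ∩
        Metric.closedBall 0 1,
      ENNReal.ofReal (‖x‖ ^ (-n)) ∂(μH[(d : ℝ) - 1]) < ⊤ := by
  classical
  set m : ℕ := d - 1 with hmdef
  have hm1 : 1 ≤ m := by omega
  have hdm1 : d = m + 1 := by omega
  have hdm : ((d : ℝ) - 1) = (m : ℝ) := by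
    rw [hmdef]
    push_cast [Nat.cast_sub (by omega : 1 ≤ d)]
    ring
  rw [hdm]
  set s : ℝ := (m : ℝ) - n with hsdef
  have hspos : 0 < s := by
    rw [hsdef, ← hdm]; linarith
  set Sig0 : Set (EuclideanSpace ℝ (Fin d)) := {x | ω x = 0 ∧ x ≠ 0} with hSig0def
  have hSig0meas : MeasurableSet Sig0 := by
    have h1 : IsClosed {x : EuclideanSpace ℝ (Fin d) | ω x = 0} :=
      isClosed_eq (hω.continuous) continuous_const
    have h2 : Sig0 = {x : EuclideanSpace ℝ (Fin d) | ω x = 0} ∩ {(0 : EuclideanSpace ℝ (Fin d))}ᶜ := by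
      ext x; simp [hSig0def, and_comm]
    rw [h2]
    exact h1.measurableSet.inter (measurableSet_singleton _).compl
  -- second derivative bound and gradient Lipschitz bound
  set C₂ : ℝ := C_ω * (2:ℝ) ^ |M_ω - 2| with hC₂def
  have hC₂ : 0 < C₂ := by
    rw [hC₂def]; positivity
  have hfd : Differentiable ℝ (fderiv ℝ ω) := by
    have h1 : ContDiff ℝ 1 (fderiv ℝ ω) := by
      apply ContDiff.fderiv_right hω
      norm_num
    exact h1.differentiable one_ne_zero
  have hdiffω : Differentiable ℝ ω := hω.differentiable (by norm_num)
  have hLipgrad : ∀ z ∈ Metric.closedBall (0 : EuclideanSpace ℝ (Fin d)) 2,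
      ∀ w ∈ Metric.closedBall (0 : EuclideanSpace ℝ (Fin d)) 2,
      ‖fderiv ℝ ω z - fderiv ℝ ω w‖ ≤ C₂ * ‖z - w‖ := by
    have hsnd : ∀ z ∈ Metric.closedBall (0 : EuclideanSpace ℝ (Fin d)) 2,
        ‖fderiv ℝ (fderiv ℝ ω) z‖ ≤ C₂ := by
      intro z hz
      have hz2 : ‖z‖ ≤ 2 := by
        rw [← dist_zero_right]; exact hz
      have hiter : ‖iteratedFDeriv ℝ 2 ω z‖ ≤ C₂ := by
        refine (hωbd 2 (by norm_num) z).trans ?_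
        have hmax1 : (1:ℝ) ≤ max 1 ‖z‖ := le_max_left _ _
        have hmax2 : max 1 ‖z‖ ≤ 2 := max_le (by norm_num) hz2
        have key : (max 1 ‖z‖) ^ (M_ω - 2) ≤ (2:ℝ) ^ |M_ω - 2| := by
          rcases le_or_gt 0 (M_ω - 2) with h | h
          · calc (max 1 ‖z‖) ^ (M_ω - 2) ≤ (2:ℝ) ^ (M_ω - 2) :=
                Real.rpow_le_rpow (by linarith) hmax2 h
              _ ≤ (2:ℝ) ^ |M_ω - 2| :=
                Real.rpow_le_rpow_of_exponent_le one_le_two (le_abs_self _)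
          · calc (max 1 ‖z‖) ^ (M_ω - 2) ≤ 1 :=
                Real.rpow_le_one_of_one_le_of_nonpos hmax1 h.le
              _ ≤ (2:ℝ) ^ |M_ω - 2| :=
                Real.one_le_rpow one_le_two (abs_nonneg _)
        rw [hC₂def]
        push_cast at key ⊢
        exact mul_le_mul_of_nonneg_left key hCω.le
      refine le_trans ?_ hiter
      apply ContinuousLinearMap.opNorm_le_bound _ (norm_nonneg _)
      intro u
      apply ContinuousLinearMap.opNorm_le_bound _ (by positivity)
      intro v
      have happ : fderiv ℝ (fderiv ℝ ω) z u v = iteratedFDeriv ℝ 2 ω z ![u, v] := by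
        rw [iteratedFDeriv_two_apply]
        simp
      rw [happ]
      have := (iteratedFDeriv ℝ 2 ω z).le_opNorm ![u, v]
      refine this.trans ?_
      simp [Fin.prod_univ_two]
      ring_nf
      exact le_refl _
    intro z hz w hw
    exact (convex_closedBall _ _).norm_image_sub_le_of_norm_fderiv_le
      (fun x _ => (hfd x)) hsnd hw hz
  -- scale factor for local balls
  set c' : ℝ := min (C_g / (2 * C₂)) 2⁻¹ with hc'def
  have hc'pos : 0 < c' := by
    rw [hc'def]
    apply lt_min (by positivity) (by norm_num)
  have hc'half : c' ≤ 2⁻¹ := min_le_right _ _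
  have hc'C₂ : C₂ * c' ≤ C_g / 2 := by
    have h1 : c' ≤ C_g / (2 * C₂) := min_le_left _ _
    calc C₂ * c' ≤ C₂ * (C_g / (2 * C₂)) := mul_le_mul_of_nonneg_left h1 hC₂.le
      _ = C_g / 2 := by field_simp
  -- the local constant
  set CL : ℝ≥0∞ := (2:ℝ≥0∞)^(m:ℝ) *
      (((m : ℝ≥0) ^ (1 / (2:ℝ≥0∞)).toReal : ℝ≥0) : ℝ≥0∞) ^ (m:ℝ) *
      ENNReal.ofReal ((2*c')^m) with hCLdef
  have hCLtop : CL ≠ ⊤ := by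
    rw [hCLdef]
    apply ENNReal.mul_ne_top
    apply ENNReal.mul_ne_top
    · exact ENNReal.rpow_ne_top_of_nonneg (by positivity) (by norm_num)
    · exact ENNReal.rpow_ne_top_of_nonneg (by positivity) ENNReal.coe_ne_top
    · exact ENNReal.ofReal_ne_top
  -- the local estimate
  have hLOC : ∀ a : EuclideanSpace ℝ (Fin d), ω a = 0 → a ≠ 0 → ‖a‖ ≤ 1 →
      μH[(m:ℝ)] (Sig0 ∩ Metric.closedBall a (c' * ‖a‖)) ≤ CL * ENNReal.ofReal (‖a‖^m) := by
    intro a ha ha0 ha1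
    have hna : 0 < ‖a‖ := norm_pos_iff.2 ha0
    have hρpos : 0 < c' * ‖a‖ := by positivity
    have hρg : C₂ * (c' * ‖a‖) ≤ ‖gradient ω a‖ / 2 := by
      have h1 : C_g * ‖a‖ ≤ ‖gradient ω a‖ := hg2 a ha ha0 ha1
      have h2 : C₂ * (c' * ‖a‖) = (C₂ * c') * ‖a‖ := by ring
      rw [h2]
      calc (C₂ * c') * ‖a‖ ≤ (C_g / 2) * ‖a‖ := mul_le_mul_of_nonneg_right hc'C₂ hna.le
        _ ≤ ‖gradient ω a‖ / 2 := by linarith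
    have hsub : Metric.closedBall a (c' * ‖a‖) ⊆
        Metric.closedBall (0 : EuclideanSpace ℝ (Fin d)) 2 := by
      intro x hx
      rw [Metric.mem_closedBall, dist_zero_right]
      have h1 : dist x a ≤ c' * ‖a‖ := hx
      rw [dist_eq_norm] at h1
      have h2 : ‖x‖ ≤ ‖x - a‖ + ‖a‖ := by
        simpa using norm_add_le (x - a) a
      have h3 : c' * ‖a‖ ≤ 2⁻¹ * 1 := by
        apply mul_le_mul hc'half ha1 hna.le (by norm_num)
      linarith
    have hmain := aux_local hdm1 ω hdiffω hC₂ hLipgrad a ha (hnocrit a ha ha0)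
      hρpos hρg hsub
    have hsubset : Sig0 ∩ Metric.closedBall a (c' * ‖a‖) ⊆
        {x | ω x = 0} ∩ Metric.closedBall a (c' * ‖a‖) := by
      intro x hx
      exact ⟨hx.1.1, hx.2⟩
    refine (measure_mono hsubset).trans (hmain.trans ?_)
    rw [hCLdef]
    have h4 : (2 * (c' * ‖a‖))^m = (2*c')^m * ‖a‖^m := by
      rw [← mul_pow]; ring_nf
    rw [h4, ENNReal.ofReal_mul (by positivity)]
    rw [mul_assoc, mul_assoc, mul_assoc]
  -- annulus estimate
  set CA : ℝ≥0∞ := ENNReal.ofReal ((4/c' + 1)^d) * CL with hCAdef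
  have hCAtop : CA ≠ ⊤ := ENNReal.mul_ne_top ENNReal.ofReal_ne_top hCLtop
  have hANN : ∀ r : ℝ, 0 < r → r ≤ 1 →
      μH[(m:ℝ)] (Sig0 ∩ (Metric.closedBall 0 r \ Metric.ball 0 (r/2))) ≤
        CA * ENNReal.ofReal (r^m) := by
    intro r hr hr1
    set S : Set (EuclideanSpace ℝ (Fin d)) :=
      Sig0 ∩ (Metric.closedBall 0 r \ Metric.ball 0 (r/2)) with hSdef
    have hSsub : S ⊆ Metric.closedBall 0 r := fun x hx => hx.2.1
    have hεpos : 0 < c' * r / 2 := by positivity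
    obtain ⟨F, hFS, hFcov, hFcard⟩ := aux_cover d (by omega) S hεpos hr hSsub
    have hcard2 : (F.card : ℝ) ≤ (4/c' + 1)^d := by
      refine hFcard.trans ?_
      have hc0 : c' ≠ 0 := hc'pos.ne'
      have hr0 : r ≠ 0 := hr.ne'
      have heq : (r + (c' * r / 2)/2)/((c' * r / 2)/2) = 4/c' + 1 := by
        field_simp
        ring
      rw [heq]
    have hnormS : ∀ a ∈ S, r/2 ≤ ‖a‖ ∧ ‖a‖ ≤ r := by
      intro a haS
      constructor
      · have h1 : a ∉ Metric.ball (0 : EuclideanSpace ℝ (Fin d)) (r/2) := haS.2.2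
        rw [Metric.mem_ball, dist_zero_right, not_lt] at h1
        exact h1
      · have h2 : a ∈ Metric.closedBall (0 : EuclideanSpace ℝ (Fin d)) r := haS.2.1
        rw [Metric.mem_closedBall, dist_zero_right] at h2
        exact h2
    have hcover2 : S ⊆ ⋃ a ∈ F, Sig0 ∩ Metric.closedBall a (c' * ‖a‖) := by
      intro x hx
      have h1 := hFcov hx
      simp only [Set.mem_iUnion] at h1 ⊢
      obtain ⟨a, haF, hxa⟩ := h1
      have haS : a ∈ S := hFS haF
      have h3 : c' * r / 2 ≤ c' * ‖a‖ := by
        have := (hnormS a haS).1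
        have : c' * (r/2) ≤ c' * ‖a‖ := mul_le_mul_of_nonneg_left this hc'pos.le
        linarith
      exact ⟨a, haF, hx.1, Metric.closedBall_subset_closedBall h3 hxa⟩
    calc μH[(m:ℝ)] S ≤ μH[(m:ℝ)] (⋃ a ∈ F, Sig0 ∩ Metric.closedBall a (c' * ‖a‖)) :=
        measure_mono hcover2
      _ ≤ ∑ a ∈ F, μH[(m:ℝ)] (Sig0 ∩ Metric.closedBall a (c' * ‖a‖)) :=
        measure_biUnion_finset_le F _
      _ ≤ ∑ _a ∈ F, CL * ENNReal.ofReal (r^m) := by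
          apply Finset.sum_le_sum
          intro a haF
          have haS : a ∈ S := hFS haF
          have ha0 : a ≠ 0 := haS.1.2
          have haω : ω a = 0 := haS.1.1
          have ha1 : ‖a‖ ≤ 1 := (hnormS a haS).2.trans hr1
          refine (hLOC a haω ha0 ha1).trans ?_
          apply mul_le_mul_right
          apply ENNReal.ofReal_le_ofReal
          exact pow_le_pow_left₀ (norm_nonneg a) (hnormS a haS).2 m
      _ = (F.card : ℝ≥0∞) * (CL * ENNReal.ofReal (r^m)) := by
          rw [Finset.sum_const, nsmul_eq_mul]
      _ ≤ ENNReal.ofReal ((4/c' + 1)^d) * (CL * ENNReal.ofReal (r^m)) := by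
          apply mul_le_mul_left
          rw [← ENNReal.ofReal_natCast]
          exact ENNReal.ofReal_le_ofReal hcard2
      _ = CA * ENNReal.ofReal (r^m) := by rw [hCAdef, hCLdef]; ring
  -- weighted annulus estimate
  set CW : ℝ≥0∞ := ENNReal.ofReal ((2:ℝ)^|n|) * CA with hCWdef
  have hCWtop : CW ≠ ⊤ := ENNReal.mul_ne_top ENNReal.ofReal_ne_top hCAtop
  have hWANN : ∀ r : ℝ, 0 < r → r ≤ 1 →
      ∫⁻ x in Sig0 ∩ (Metric.closedBall 0 r \ Metric.ball 0 (r/2)),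
        ENNReal.ofReal (‖x‖ ^ (-n)) ∂(μH[(m:ℝ)]) ≤ CW * ENNReal.ofReal (r ^ s) := by
    intro r hr hr1
    set S : Set (EuclideanSpace ℝ (Fin d)) :=
      Sig0 ∩ (Metric.closedBall 0 r \ Metric.ball 0 (r/2)) with hSdef
    have hSmeas : MeasurableSet S :=
      hSig0meas.inter (measurableSet_closedBall.diff measurableSet_ball)
    have hptwise : ∀ x ∈ S, ENNReal.ofReal (‖x‖ ^ (-n)) ≤
        ENNReal.ofReal ((2:ℝ)^|n| * r^(-n)) := by
      intro x hx
      apply ENNReal.ofReal_le_ofReal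
      have hx1 : r/2 ≤ ‖x‖ := by
        have h1 : x ∉ Metric.ball (0 : EuclideanSpace ℝ (Fin d)) (r/2) := hx.2.2
        rw [Metric.mem_ball, dist_zero_right, not_lt] at h1
        exact h1
      have hx2 : ‖x‖ ≤ r := by
        have h2 : x ∈ Metric.closedBall (0 : EuclideanSpace ℝ (Fin d)) r := hx.2.1
        rw [Metric.mem_closedBall, dist_zero_right] at h2
        exact h2
      rcases le_or_gt 0 n with hn0 | hn0
      · calc ‖x‖ ^ (-n) ≤ (r/2) ^ (-n) :=
            Real.rpow_le_rpow_of_nonpos (by linarith) hx1 (by linarith)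
          _ = r^(-n) * (2:ℝ)^n := by
              rw [div_eq_mul_inv, Real.mul_rpow hr.le (by norm_num : (0:ℝ) ≤ 2⁻¹),
                Real.inv_rpow (by norm_num : (0:ℝ) ≤ 2),
                Real.rpow_neg (by norm_num : (0:ℝ) ≤ 2), inv_inv]
          _ ≤ (2:ℝ)^|n| * r^(-n) := by
              rw [mul_comm]
              apply mul_le_mul_of_nonneg_right
              · exact Real.rpow_le_rpow_of_exponent_le one_le_two (le_abs_self n)
              · positivity
      · calc ‖x‖ ^ (-n) ≤ r ^ (-n) :=
            Real.rpow_le_rpow (norm_nonneg x) hx2 (by linarith)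
          _ ≤ (2:ℝ)^|n| * r^(-n) := by
              have h1 : (1:ℝ) ≤ (2:ℝ)^|n| := Real.one_le_rpow one_le_two (abs_nonneg n)
              nlinarith [Real.rpow_nonneg hr.le (-n)]
    calc ∫⁻ x in S, ENNReal.ofReal (‖x‖ ^ (-n)) ∂(μH[(m:ℝ)])
        ≤ ∫⁻ _x in S, ENNReal.ofReal ((2:ℝ)^|n| * r^(-n)) ∂(μH[(m:ℝ)]) :=
          setLIntegral_mono' hSmeas hptwise
      _ = ENNReal.ofReal ((2:ℝ)^|n| * r^(-n)) * μH[(m:ℝ)] S := setLIntegral_const _ _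
      _ ≤ ENNReal.ofReal ((2:ℝ)^|n| * r^(-n)) * (CA * ENNReal.ofReal (r^m)) :=
          mul_le_mul_right (hANN r hr hr1) _
      _ = CW * ENNReal.ofReal (r ^ s) := by
          rw [hCWdef, ENNReal.ofReal_mul (by positivity)]
          have hrs : ENNReal.ofReal (r^s) = ENNReal.ofReal (r^(-n)) * ENNReal.ofReal (r^m) := by
            rw [← ENNReal.ofReal_mul (by positivity)]
            congr 1
            rw [← Real.rpow_natCast r m, ← Real.rpow_add hr, hsdef]
            ring_nf
          rw [hrs]
          ring
  -- the dyadic decomposition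
  have hgeo : ENNReal.ofReal ((2:ℝ)⁻¹ ^ s) < 1 := by
    rw [← ENNReal.ofReal_one]
    apply ENNReal.ofReal_lt_ofReal_iff_of_nonneg (by positivity) |>.2
    exact Real.rpow_lt_one (by norm_num) (by norm_num) hspos
  set q : ℝ≥0∞ := ENNReal.ofReal ((2:ℝ)⁻¹ ^ s) with hqdef
  set A : ℝ≥0∞ := CW * (1 - q)⁻¹ with hAdef
  have hAtop : A ≠ ⊤ := by
    rw [hAdef]
    apply ENNReal.mul_ne_top hCWtop
    rw [ENNReal.inv_ne_top]
    intro hcontra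
    rw [tsub_eq_zero_iff_le] at hcontra
    exact absurd hcontra (not_le.2 hgeo)
  have hMAIN : ∀ δ : ℝ, 0 < δ → δ ≤ 1 →
      ∫⁻ x in Sig0 ∩ Metric.closedBall 0 δ,
        ENNReal.ofReal (‖x‖ ^ (-n)) ∂(μH[(m:ℝ)]) ≤ A * ENNReal.ofReal (δ ^ s) := by
    intro δ hδ hδ1
    have hcov : Sig0 ∩ Metric.closedBall 0 δ ⊆
        ⋃ k : ℕ, Sig0 ∩ (Metric.closedBall 0 ((2:ℝ)⁻¹^k * δ) \
          Metric.ball 0 (((2:ℝ)⁻¹^k * δ)/2)) := by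
      intro x hx
      have hx0 : x ≠ 0 := hx.1.2
      have hxpos : 0 < ‖x‖ := norm_pos_iff.2 hx0
      have hxδ : ‖x‖ ≤ δ := by
        have := hx.2
        rwa [Metric.mem_closedBall, dist_zero_right] at this
      have hex : ∃ k : ℕ, (2:ℝ)⁻¹^k * δ / 2 < ‖x‖ := by
        obtain ⟨k, hk⟩ := exists_pow_lt_of_lt_one
          (show (0:ℝ) < 2 * ‖x‖ / δ by positivity)
          (show (2:ℝ)⁻¹ < 1 by norm_num)
        refine ⟨k, ?_⟩
        have h2 : (2:ℝ)⁻¹^k * δ < 2 * ‖x‖ := by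
          calc (2:ℝ)⁻¹^k * δ < (2 * ‖x‖ / δ) * δ := mul_lt_mul_of_pos_right hk hδ
            _ = 2 * ‖x‖ := by field_simp
        linarith
      set k := Nat.find hex with hkdef
      have hk1 : (2:ℝ)⁻¹^k * δ / 2 < ‖x‖ := Nat.find_spec hex
      have hk2 : ‖x‖ ≤ (2:ℝ)⁻¹^k * δ := by
        rcases Nat.eq_zero_or_pos k with hk0 | hkpos
        · rw [hk0]; simpa using hxδ
        · obtain ⟨j, hj⟩ := Nat.exists_eq_succ_of_ne_zero hkpos.ne'
          have hmin := Nat.find_min hex (by omega : j < k)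
          rw [not_lt] at hmin
          have : (2:ℝ)⁻¹^k * δ = (2:ℝ)⁻¹^j * δ / 2 := by
            rw [hj, pow_succ]
            ring
          rw [this]
          exact hmin
      simp only [Set.mem_iUnion]
      refine ⟨k, hx.1, ?_, ?_⟩
      · rw [Metric.mem_closedBall, dist_zero_right]
        exact hk2
      · rw [Metric.mem_ball, dist_zero_right, not_lt]
        linarith
    refine le_trans (lintegral_mono_set hcov) ?_
    refine le_trans (lintegral_iUnion_le _ _) ?_
    have hterm : ∀ k : ℕ,
        ∫⁻ x in Sig0 ∩ (Metric.closedBall 0 ((2:ℝ)⁻¹^k * δ) \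
          Metric.ball 0 (((2:ℝ)⁻¹^k * δ)/2)),
          ENNReal.ofReal (‖x‖ ^ (-n)) ∂(μH[(m:ℝ)]) ≤
        CW * (ENNReal.ofReal (δ ^ s) * q^k) := by
      intro k
      have hrk : 0 < (2:ℝ)⁻¹^k * δ := by positivity
      have hrk1 : (2:ℝ)⁻¹^k * δ ≤ 1 := by
        have h1 : (2:ℝ)⁻¹^k ≤ 1 := pow_le_one₀ (by norm_num) (by norm_num)
        nlinarith
      refine (hWANN _ hrk hrk1).trans ?_
      apply mul_le_mul_right
      have heq : ((2:ℝ)⁻¹^k * δ) ^ s = δ ^ s * ((2:ℝ)⁻¹ ^ s)^k := by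
        rw [Real.mul_rpow (by positivity) hδ.le]
        rw [← Real.rpow_natCast ((2:ℝ)⁻¹) k, ← Real.rpow_natCast ((2:ℝ)⁻¹ ^ s) k]
        rw [← Real.rpow_mul (by norm_num : (0:ℝ) ≤ 2⁻¹),
            ← Real.rpow_mul (by norm_num : (0:ℝ) ≤ 2⁻¹)]
        rw [mul_comm (k:ℝ) s]
        ring
      rw [heq, ENNReal.ofReal_mul (by positivity), hqdef]
      rw [ENNReal.ofReal_pow (by positivity)]
    refine le_trans (ENNReal.tsum_le_tsum hterm) ?_
    rw [ENNReal.tsum_mul_left, ENNReal.tsum_mul_left, ENNReal.tsum_geometric]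
    rw [hAdef]
    ring_nf
    exact le_refl _
  constructor
  · refine ⟨A.toReal + 1, by positivity, ?_⟩
    intro δ hδ hδhalf
    have h1 := hMAIN δ hδ (by linarith)
    refine h1.trans ?_
    rw [ENNReal.ofReal_mul (by positivity)]
    apply mul_le_mul_left
    calc A = ENNReal.ofReal A.toReal := (ENNReal.ofReal_toReal hAtop).symm
      _ ≤ ENNReal.ofReal (A.toReal + 1) := ENNReal.ofReal_le_ofReal (by linarith)
  · have hsplit : Sig0 ∩ Metric.closedBall 0 1 ⊆
        (Sig0 ∩ Metric.closedBall 0 (2⁻¹)) ∪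
        (Sig0 ∩ (Metric.closedBall 0 1 \ Metric.ball 0 (1/2))) := by
      intro x hx
      rcases le_or_gt ‖x‖ 2⁻¹ with h | h
      · left
        exact ⟨hx.1, by rwa [Metric.mem_closedBall, dist_zero_right]⟩
      · right
        refine ⟨hx.1, hx.2, ?_⟩
        rw [Metric.mem_ball, dist_zero_right, not_lt]
        linarith
    refine lt_of_le_of_lt (lintegral_mono_set hsplit) ?_
    refine lt_of_le_of_lt (lintegral_mono' (Measure.restrict_union_le _ _) le_rfl) ?_
    rw [lintegral_add_measure]
    apply ENNReal.add_lt_top.2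
    constructor
    · refine lt_of_le_of_lt (hMAIN 2⁻¹ (by norm_num) (by norm_num)) ?_
      exact ENNReal.mul_lt_top hAtop.lt_top ENNReal.ofReal_lt_top
    · exact (hWANN 1 one_pos le_rfl).trans_lt
        (ENNReal.mul_lt_top hCWtop.lt_top ENNReal.ofReal_lt_top)
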